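/- Let Σ be a relational signature and K, K' finite Σ-structures. Then K and K' satisfy exactly the same closed conjunctive queries over Σ (i.e. for every conjunctive query φ with fv(φ) = ∅, the empty assignment satisfies φ in K iff it satisfies φ in K') if and only if there exist homomorphisms of Σ-structures K → K' and K' → K. -/

import Mathlib

/-- A homomorphism of `Σ`-structures: a map on universes preserving all relations. -/
def IsHom {Sig : Type} (ar : Sig → ℕ) {U U' : Type}
    (K : (R : Sig) → Set (Fin (ar R) → U))
    (K' : (R : Sig) → Set (Fin (ar R) → U'))
    (f : U → U') : Prop :=
  ∀ R : Sig, ∀ x ∈ K R, (f ∘ x) ∈ K' R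

/-- A conjunctive query over signature `(Sig, ar)` with variables `V`:
a set `fv` of free variables and a set of atoms `(R, x)`. -/
structure CQ (Sig : Type) (ar : Sig → ℕ) (V : Type) where
  fv : Set V
  atoms : Set ((R : Sig) × (Fin (ar R) → V))

/-- An assignment `v : fv(φ) → U` satisfies `φ` in `K` iff it extends to a
total assignment `w : var(φ) → U` sending every atom into the structure. -/
def Satisfies {Sig : Type} {ar : Sig → ℕ} {V U : Type}
    (φ : CQ Sig ar V) (K : (R : Sig) → Set (Fin (ar R) → U))
    (v : φ.fv → U) : Prop :=
  ∃ w : V → U, (∀ x : φ.fv, w x = v x) ∧ ∀ a ∈ φ.atoms, (w ∘ a.2) ∈ K a.1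

/-- The canonical structure of a conjunctive query: universe `var(φ)`,
with `R` interpreted by the atoms of `φ` labelled `R`. -/
def CM {Sig : Type} {ar : Sig → ℕ} {V : Type} (φ : CQ Sig ar V) :
    (R : Sig) → Set (Fin (ar R) → V) :=
  fun R => {x | (⟨R, x⟩ : (R : Sig) × (Fin (ar R) → V)) ∈ φ.atoms}

/-- Two finite structures satisfy the same closed conjunctive queries iff they
are homomorphically equivalent. -/
theorem same_closed_queries_iff_hom_equiv {Sig UK UK' : Type} (ar : Sig → ℕ)
    [Finite UK] [Finite UK']
    (K : (R : Sig) → Set (Fin (ar R) → UK))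
    (K' : (R : Sig) → Set (Fin (ar R) → UK')) :
    (∀ (V : Type) (_ : Finite V) (φ : CQ Sig ar V), φ.fv = ∅ →
        ∀ (v : φ.fv → UK) (v' : φ.fv → UK'),
          (Satisfies φ K v ↔ Satisfies φ K' v'))
    ↔ ((∃ f : UK → UK', IsHom ar K K' f) ∧ (∃ g : UK' → UK, IsHom ar K' K g)) := by
  constructor
  · intro h
    constructor
    · -- canonical query of K
      let φ : CQ Sig ar UK := ⟨∅, {a | a.2 ∈ K a.1}⟩
      have hfv : φ.fv = ∅ := rfl
      have hv : φ.fv → UK := fun x => absurd x.2 (Set.eq_empty_iff_forall_notMem.mp hfv x.1)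
      have hv' : φ.fv → UK' := fun x => absurd x.2 (Set.eq_empty_iff_forall_notMem.mp hfv x.1)
      have hK : Satisfies φ K hv :=
        ⟨id, fun x => absurd x.2 (Set.eq_empty_iff_forall_notMem.mp hfv x.1), fun a ha => ha⟩
      obtain ⟨w, -, hw⟩ := (h UK inferInstance φ hfv hv hv').mp hK
      exact ⟨w, fun R x hx => hw ⟨R, x⟩ hx⟩
    · let φ : CQ Sig ar UK' := ⟨∅, {a | a.2 ∈ K' a.1}⟩
      have hfv : φ.fv = ∅ := rfl
      have hv : φ.fv → UK := fun x => absurd x.2 (Set.eq_empty_iff_forall_notMem.mp hfv x.1)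
      have hv' : φ.fv → UK' := fun x => absurd x.2 (Set.eq_empty_iff_forall_notMem.mp hfv x.1)
      have hK' : Satisfies φ K' hv' :=
        ⟨id, fun x => absurd x.2 (Set.eq_empty_iff_forall_notMem.mp hfv x.1), fun a ha => ha⟩
      obtain ⟨w, -, hw⟩ := (h UK' inferInstance φ hfv hv hv').mpr hK'
      exact ⟨w, fun R x hx => hw ⟨R, x⟩ hx⟩
  · rintro ⟨⟨f, hf⟩, ⟨g, hg⟩⟩ V _ φ hfv v v'
    constructor
    · rintro ⟨w, -, hw⟩
      refine ⟨f ∘ w, fun x => absurd x.2 (Set.eq_empty_iff_forall_notMem.mp hfv x.1), ?_⟩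
      intro a ha
      have := hf a.1 (w ∘ a.2) (hw a ha)
      exact this
    · rintro ⟨w, -, hw⟩
      refine ⟨g ∘ w, fun x => absurd x.2 (Set.eq_empty_iff_forall_notMem.mp hfv x.1), ?_⟩
      intro a ha
      have := hg a.1 (w ∘ a.2) (hw a ha)
      exact this
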